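/- arXiv:2512.23265 — 2 statements merged into one kernel-verified Lean document; each statement's English description precedes it below -/
import Mathlib

section
/- For D ≥ 2 there exist two distinct jointly Gaussian couplings π ≠ π' on ℝ^D × ℝ^D having the same Gaussian marginals p₀ = N(μ₀,Σ₀) and p₁ = N(μ₁,Σ₁), and such that the law of (1−t)X₀ + tX₁ is the same under π and π' for every t ∈ [0,1]. (E.g., with Σ₀ = Σ₁ = I, take S antisymmetric nonzero with small norm and S' = 0.) -/
open MeasureTheory Complex Matrix

/-- `μ` is the Gaussian measure on `ℝ^D` with mean `m` and covariance `C`,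
characterized by its characteristic function. -/
def IsGaussianWith {D : ℕ} (μ : Measure (Fin D → ℝ)) (m : Fin D → ℝ)
    (C : Matrix (Fin D) (Fin D) ℝ) : Prop :=
  ∀ ξ : Fin D → ℝ,
    ∫ x, Complex.exp (Complex.I * (ξ ⬝ᵥ x : ℝ)) ∂μ =
      Complex.exp (Complex.I * (ξ ⬝ᵥ m : ℝ) - ((ξ ⬝ᵥ C.mulVec ξ : ℝ) : ℂ) / 2)

/-- `π` is the jointly Gaussian measure on `ℝ^D × ℝ^D` with means `μ₀, μ₁` and
block covariance `[[Sig0, S], [Sᵀ, Sig1]]`, characterized by its characteristic function. -/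
def IsJointGaussianWith {D : ℕ} (π : Measure ((Fin D → ℝ) × (Fin D → ℝ)))
    (μ₀ μ₁ : Fin D → ℝ) (Sig0 Sig1 S : Matrix (Fin D) (Fin D) ℝ) : Prop :=
  ∀ ξ₀ ξ₁ : Fin D → ℝ,
    ∫ p, Complex.exp (Complex.I * ((ξ₀ ⬝ᵥ p.1 + ξ₁ ⬝ᵥ p.2 : ℝ))) ∂π =
      Complex.exp (Complex.I * ((ξ₀ ⬝ᵥ μ₀ + ξ₁ ⬝ᵥ μ₁ : ℝ)) -
        (((ξ₀ ⬝ᵥ Sig0.mulVec ξ₀ + 2 * (ξ₀ ⬝ᵥ S.mulVec ξ₁) + ξ₁ ⬝ᵥ Sig1.mulVec ξ₁ : ℝ)) : ℂ) / 2)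

/-! ### Auxiliary development

We construct the standard Gaussian measure on `ℝ^D` explicitly as a density against
Lebesgue measure, and a family of Givens rotations `Rot i0 i1 a b` acting on the
coordinates `i0, i1`.  All characteristic functions are computed explicitly, and the
equality of interpolant laws is reduced to rotation invariance of the Gaussian measure. -/

open scoped ENNReal NNReal

section RotDev

variable {D : ℕ}

/-- Givens rotation-like map in coordinates `i0, i1`. -/
def Rot (i0 i1 : Fin D) (a b : ℝ) (g : Fin D → ℝ) : Fin D → ℝ :=
  fun i => if i = i0 then a * g i0 - b * g i1 else if i = i1 then b * g i0 + a * g i1 else g i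

variable {i0 i1 : Fin D} (h01 : i0 ≠ i1)
include h01

omit h01 in
lemma Rot_apply_i0 (a b : ℝ) (g : Fin D → ℝ) : Rot i0 i1 a b g i0 = a * g i0 - b * g i1 := by
  simp [Rot]

lemma Rot_apply_i1 (a b : ℝ) (g : Fin D → ℝ) : Rot i0 i1 a b g i1 = b * g i0 + a * g i1 := by
  simp [Rot, h01.symm]

omit h01 in
lemma Rot_apply_other (a b : ℝ) (g : Fin D → ℝ) {i : Fin D} (h0 : i ≠ i0) (h1 : i ≠ i1) :
    Rot i0 i1 a b g i = g i := by
  simp [Rot, h0, h1]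

lemma Rot_comp (a b c d : ℝ) (g : Fin D → ℝ) :
    Rot i0 i1 a b (Rot i0 i1 c d g) = Rot i0 i1 (a * c - b * d) (a * d + b * c) g := by
  funext i
  by_cases h0 : i = i0
  · subst h0
    rw [Rot_apply_i0, Rot_apply_i0, Rot_apply_i0, Rot_apply_i1 h01]
    ring
  by_cases h1 : i = i1
  · subst h1
    rw [Rot_apply_i1 h01, Rot_apply_i1 h01, Rot_apply_i0, Rot_apply_i1 h01]
    ring
  · rw [Rot_apply_other a b _ h0 h1, Rot_apply_other _ _ _ h0 h1, Rot_apply_other _ _ _ h0 h1]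

lemma Rot_one (g : Fin D → ℝ) : Rot i0 i1 1 0 g = g := by
  funext i
  by_cases h0 : i = i0
  · subst h0; rw [Rot_apply_i0]; ring
  by_cases h1 : i = i1
  · subst h1; rw [Rot_apply_i1 h01]; ring
  · exact Rot_apply_other _ _ _ h0 h1

lemma measurable_Rot (a b : ℝ) : Measurable (Rot i0 i1 a b : (Fin D → ℝ) → (Fin D → ℝ)) := by
  apply measurable_pi_lambda
  intro i
  by_cases h0 : i = i0
  · simp only [h0, Rot_apply_i0]
    fun_prop
  by_cases h1 : i = i1
  · simp only [h1, Rot_apply_i1 h01]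
    fun_prop
  · simp only [Rot_apply_other _ _ _ h0 h1]
    exact measurable_pi_apply i

lemma sum_split (f : Fin D → ℝ) :
    ∑ i, f i = f i0 + f i1 + ∑ i ∈ (Finset.univ.erase i0).erase i1, f i := by
  rw [add_assoc, Finset.add_sum_erase _ f (Finset.mem_erase.2 ⟨h01.symm, Finset.mem_univ i1⟩),
    Finset.add_sum_erase _ f (Finset.mem_univ i0)]

omit h01 in
lemma mem_erase2 {i : Fin D} (hi : i ∈ (Finset.univ.erase i0).erase i1) : i ≠ i0 ∧ i ≠ i1 := by
  rcases Finset.mem_erase.1 hi with ⟨h1, h2⟩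
  exact ⟨(Finset.mem_erase.1 h2).1, h1⟩

lemma dot_Rot (a b : ℝ) (ξ g : Fin D → ℝ) :
    Rot i0 i1 a b ξ ⬝ᵥ g = ξ ⬝ᵥ Rot i0 i1 a (-b) g := by
  simp only [dotProduct]
  rw [sum_split h01 (fun i => Rot i0 i1 a b ξ i * g i),
    sum_split h01 (fun i => ξ i * Rot i0 i1 a (-b) g i)]
  have : ∀ i ∈ (Finset.univ.erase i0).erase i1,
      Rot i0 i1 a b ξ i * g i = ξ i * Rot i0 i1 a (-b) g i := by
    intro i hi
    rcases mem_erase2 hi with ⟨h0, h1⟩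
    rw [Rot_apply_other _ _ _ h0 h1, Rot_apply_other _ _ _ h0 h1]
  rw [Finset.sum_congr rfl this, Rot_apply_i0, Rot_apply_i1 h01, Rot_apply_i0, Rot_apply_i1 h01]
  ring

lemma dot_Rot' (a b : ℝ) (ξ g : Fin D → ℝ) :
    ξ ⬝ᵥ Rot i0 i1 a b g = Rot i0 i1 a (-b) ξ ⬝ᵥ g := by
  rw [dot_Rot h01, neg_neg]

lemma Rot_dot_self {a b : ℝ} (hab : a ^ 2 + b ^ 2 = 1) (ξ : Fin D → ℝ) :
    Rot i0 i1 a b ξ ⬝ᵥ Rot i0 i1 a b ξ = ξ ⬝ᵥ ξ := by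
  rw [dot_Rot h01, Rot_comp h01]
  have h1 : a * a - -b * b = 1 := by nlinarith
  rw [h1]
  have h2 : a * b + -b * a = 0 := by ring
  rw [h2, Rot_one h01]

lemma smul_add_smul_Rot {c d : ℝ} (hcd : c + d = 1) (g : Fin D → ℝ) :
    c • g + d • Rot i0 i1 0 1 g = Rot i0 i1 c d g := by
  funext i
  simp only [Pi.add_apply, Pi.smul_apply, smul_eq_mul]
  by_cases h0 : i = i0
  · subst h0; rw [Rot_apply_i0, Rot_apply_i0]; ring
  by_cases h1 : i = i1
  · subst h1; rw [Rot_apply_i1 h01, Rot_apply_i1 h01]; ring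
  · rw [Rot_apply_other _ _ _ h0 h1, Rot_apply_other _ _ _ h0 h1]
    linear_combination g i * hcd

lemma Rot_sum_sq {a b : ℝ} (hab : a ^ 2 + b ^ 2 = 1) (ξ : Fin D → ℝ) :
    ∑ i, Rot i0 i1 a b ξ i ^ 2 = ∑ i, ξ i ^ 2 := by
  have := Rot_dot_self h01 hab ξ
  simpa [dotProduct, sq] using this

lemma Rot_map_add (a b : ℝ) (x y : Fin D → ℝ) :
    Rot i0 i1 a b (x + y) = Rot i0 i1 a b x + Rot i0 i1 a b y := by
  funext i
  simp only [Pi.add_apply]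
  by_cases h0 : i = i0
  · simp only [h0, Rot_apply_i0, Pi.add_apply]; ring
  by_cases h1 : i = i1
  · simp only [h1, Rot_apply_i1 h01, Pi.add_apply]; ring
  · simp only [Rot_apply_other _ _ _ h0 h1, Pi.add_apply]

lemma Rot_map_smul (a b c : ℝ) (x : Fin D → ℝ) :
    Rot i0 i1 a b (c • x) = c • Rot i0 i1 a b x := by
  funext i
  simp only [Pi.smul_apply, smul_eq_mul]
  by_cases h0 : i = i0
  · simp only [h0, Rot_apply_i0, Pi.smul_apply, smul_eq_mul]; ring
  by_cases h1 : i = i1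
  · simp only [h1, Rot_apply_i1 h01, Pi.smul_apply, smul_eq_mul]; ring
  · simp only [Rot_apply_other _ _ _ h0 h1, Pi.smul_apply, smul_eq_mul]

/-- The Givens rotation as a linear isometry equivalence of Euclidean space. -/
noncomputable def rotIso {a b : ℝ} (hab : a ^ 2 + b ^ 2 = 1) :
    EuclideanSpace ℝ (Fin D) ≃ₗᵢ[ℝ] EuclideanSpace ℝ (Fin D) where
  toFun := fun x => WithLp.toLp 2 (Rot i0 i1 a b (WithLp.ofLp x))
  invFun := fun x => WithLp.toLp 2 (Rot i0 i1 a (-b) (WithLp.ofLp x))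
  map_add' := fun x y => by simp only [WithLp.ofLp_add, Rot_map_add h01 a b, WithLp.toLp_add]
  map_smul' := fun c x => by simp only [WithLp.ofLp_smul, Rot_map_smul h01 a b, WithLp.toLp_smul]; rfl
  left_inv := fun g => by
    show WithLp.toLp 2 (Rot i0 i1 a (-b) (Rot i0 i1 a b (WithLp.ofLp g))) = g
    rw [Rot_comp h01]
    have h1 : a * a - -b * b = 1 := by nlinarith
    have h2 : a * b + -b * a = 0 := by ring
    rw [h1, h2, Rot_one h01]
  right_inv := fun g => by
    show WithLp.toLp 2 (Rot i0 i1 a b (Rot i0 i1 a (-b) (WithLp.ofLp g))) = g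
    rw [Rot_comp h01]
    have h1 : a * a - b * -b = 1 := by nlinarith
    have h2 : a * -b + b * a = 0 := by ring
    rw [h1, h2, Rot_one h01]
  norm_map' := fun x => by
    simp only [LinearEquiv.coe_mk, LinearMap.coe_mk, AddHom.coe_mk]
    rw [EuclideanSpace.norm_eq, EuclideanSpace.norm_eq]
    congr 1
    simp only [Real.norm_eq_abs, sq_abs, PiLp.toLp_apply]
    simpa [sq_abs] using Rot_sum_sq h01 hab x

lemma volume_map_Rot {a b : ℝ} (hab : a ^ 2 + b ^ 2 = 1) :
    (volume : Measure (Fin D → ℝ)).map (Rot i0 i1 a b) = volume := by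
  have h1 : MeasurePreserving (rotIso h01 hab) volume volume :=
    (rotIso h01 hab).measurePreserving
  have h2 := EuclideanSpace.volume_preserving_symm_measurableEquiv_toLp (Fin D)
  have h3 := h2.comp (h1.comp (MeasurePreserving.symm _ h2))
  have h4 : (⇑(MeasurableEquiv.toLp 2 (Fin D → ℝ)).symm ∘ ⇑(rotIso h01 hab) ∘
      ⇑(MeasurableEquiv.toLp 2 (Fin D → ℝ)).symm.symm) = Rot i0 i1 a b := rfl
  rw [h4] at h3
  exact h3.map_eq

end RotDev

section GaussDev

noncomputable def gpdf (x : ℝ) : ℝ := (Real.sqrt (2 * Real.pi))⁻¹ * Real.exp (-x ^ 2 / 2)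

lemma gpdf_nonneg (x : ℝ) : 0 ≤ gpdf x := by
  apply mul_nonneg (inv_nonneg.2 (Real.sqrt_nonneg _)) (Real.exp_nonneg _)

lemma measurable_gpdf : Measurable gpdf := by
  unfold gpdf; fun_prop

lemma sqrt_two_pi_pos : (0:ℝ) < Real.sqrt (2 * Real.pi) :=
  Real.sqrt_pos.2 (by positivity)

lemma integrable_gpdf : Integrable gpdf := by
  have h : (fun x : ℝ => Real.exp (-x ^ 2 / 2)) = fun x => Real.exp (-(1/2 : ℝ) * x ^ 2) := by
    funext x; ring_nf
  unfold gpdf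
  simp_rw [mul_comm]
  apply Integrable.mul_const
  rw [h]
  exact integrable_exp_neg_mul_sq (by norm_num)

lemma integral_gpdf : ∫ x, gpdf x = 1 := by
  unfold gpdf
  rw [integral_const_mul]
  have h : (fun x : ℝ => Real.exp (-x ^ 2 / 2)) = fun x => Real.exp (-(1/2 : ℝ) * x ^ 2) := by
    funext x; ring_nf
  rw [h, integral_gaussian]
  have : Real.pi / (1/2) = 2 * Real.pi := by ring
  rw [this]
  exact inv_mul_cancel₀ (ne_of_gt sqrt_two_pi_pos)

/-- 1D Gaussian characteristic function. -/
lemma integral_gpdf_cexp (c : ℝ) :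
    ∫ x : ℝ, (gpdf x : ℂ) * Complex.exp (Complex.I * c * x) =
      Complex.exp (-(c ^ 2 : ℝ) / 2) := by
  have h : ∀ x : ℝ, (gpdf x : ℂ) * Complex.exp (Complex.I * c * x) =
      ((Real.sqrt (2 * Real.pi) : ℝ) : ℂ)⁻¹ *
        Complex.exp ((-(1/2) : ℂ) * x ^ 2 + (Complex.I * c) * x + 0) := by
    intro x
    rw [gpdf]
    push_cast
    rw [mul_assoc, ← Complex.exp_add]
    congr 1
    push_cast
    ring
  simp_rw [h]
  rw [integral_const_mul, integral_cexp_quadratic (by norm_num : (-(1/2) : ℂ).re < 0)]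
  have h2 : ((Real.pi : ℂ) / -(-(1/2))) = ((2 * Real.pi : ℝ) : ℂ) := by
    push_cast; ring
  rw [h2]
  have h3 : ((2 * Real.pi : ℝ) : ℂ) ^ (1/2 : ℂ) = ((Real.sqrt (2 * Real.pi) : ℝ) : ℂ) := by
    rw [show (1/2 : ℂ) = ((1/2 : ℝ) : ℂ) by norm_num,
      ← Complex.ofReal_cpow (by positivity), Real.sqrt_eq_rpow]
  rw [h3, ← mul_assoc]
  rw [inv_mul_cancel₀ (by exact_mod_cast ne_of_gt sqrt_two_pi_pos), one_mul]
  congr 1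
  have : (Complex.I * c) ^ 2 = -(c^2 : ℂ) := by
    rw [mul_pow, Complex.I_sq]; ring
  rw [this]
  push_cast
  ring

noncomputable def gmeas (D : ℕ) : Measure (Fin D → ℝ) :=
  volume.withDensity (fun x => ENNReal.ofReal (∏ i, gpdf (x i)))

lemma measurable_gprod {D : ℕ} : Measurable (fun x : Fin D → ℝ => ∏ i, gpdf (x i)) :=
  Finset.measurable_prod _ fun i _ => measurable_gpdf.comp (measurable_pi_apply i)

lemma integrable_gprod {D : ℕ} : Integrable (fun x : Fin D → ℝ => ∏ i, gpdf (x i)) :=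
  Integrable.fintype_prod (𝕜 := ℝ) fun _ => integrable_gpdf

instance gmeas_prob (D : ℕ) : IsProbabilityMeasure (gmeas D) := by
  constructor
  rw [gmeas, withDensity_apply _ MeasurableSet.univ, Measure.restrict_univ,
    ← ofReal_integral_eq_lintegral_ofReal integrable_gprod
      (Filter.Eventually.of_forall fun x => Finset.prod_nonneg fun i _ => gpdf_nonneg _)]
  rw [integral_fintype_prod_volume_eq_prod (ι := Fin D) (f := fun _ v => gpdf v)]
  simp [integral_gpdf]

/-- Characteristic function of the standard Gaussian measure. -/
lemma gmeas_charFun {D : ℕ} (η : Fin D → ℝ) :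
    ∫ x, Complex.exp (Complex.I * ((η ⬝ᵥ x : ℝ) : ℂ)) ∂(gmeas D) =
      Complex.exp (-((η ⬝ᵥ η : ℝ) : ℂ) / 2) := by
  have hd : (fun x : Fin D → ℝ => ENNReal.ofReal (∏ i, gpdf (x i))) =
      fun x => ((∏ i, gpdf (x i)).toNNReal : ℝ≥0∞) := rfl
  rw [gmeas, hd, integral_withDensity_eq_integral_smul
      (measurable_gprod.real_toNNReal) _]
  have h1 : ∀ x : Fin D → ℝ, (∏ i, gpdf (x i)).toNNReal •
      Complex.exp (Complex.I * ((η ⬝ᵥ x : ℝ) : ℂ)) =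
      ∏ i, ((gpdf (x i) : ℂ) * Complex.exp (Complex.I * (η i) * (x i))) := by
    intro x
    rw [NNReal.smul_def, Real.coe_toNNReal _ (Finset.prod_nonneg fun i _ => gpdf_nonneg _),
      Complex.real_smul, Finset.prod_mul_distrib, dotProduct]
    push_cast
    rw [Finset.mul_sum, Complex.exp_sum]
    congr 1
    exact Finset.prod_congr rfl fun i _ => by rw [mul_assoc]
  simp_rw [h1]
  rw [integral_fintype_prod_volume_eq_prod (ι := Fin D)
    (f := fun i v => (gpdf v : ℂ) * Complex.exp (Complex.I * (η i) * v))]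
  simp_rw [integral_gpdf_cexp]
  rw [← Complex.exp_sum]
  congr 1
  rw [dotProduct]
  push_cast
  rw [← Finset.sum_div, ← Finset.sum_neg_distrib]
  congr 1
  congr 1
  funext i
  ring

lemma prod_gpdf_eq {D : ℕ} (v : Fin D → ℝ) :
    ∏ i, gpdf (v i) = (Real.sqrt (2 * Real.pi))⁻¹ ^ D * Real.exp (-(∑ i, (v i) ^ 2) / 2) := by
  unfold gpdf
  rw [Finset.prod_mul_distrib, Finset.prod_const, ← Real.exp_sum]
  congr 1
  · simp
  · congr 1
    simp [neg_div, Finset.sum_neg_distrib, Finset.sum_div]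

end GaussDev

section GaussRot

variable {D : ℕ} {i0 i1 : Fin D} (h01 : i0 ≠ i1)
include h01

lemma gmeas_map_Rot {a b : ℝ} (hab : a ^ 2 + b ^ 2 = 1) :
    (gmeas D).map (Rot i0 i1 a b) = gmeas D := by
  have hR := measurable_Rot h01 a b
  have hFR : ∀ x, (fun x : Fin D → ℝ => ENNReal.ofReal (∏ i, gpdf (x i))) (Rot i0 i1 a b x) =
      ENNReal.ofReal (∏ i, gpdf (x i)) := by
    intro x
    simp only
    rw [prod_gpdf_eq, prod_gpdf_eq, Rot_sum_sq h01 hab]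
  ext s hs
  rw [Measure.map_apply hR hs, gmeas, withDensity_apply _ (hs.preimage hR), withDensity_apply _ hs]
  calc ∫⁻ x in Rot i0 i1 a b ⁻¹' s, ENNReal.ofReal (∏ i, gpdf (x i)) ∂volume
      = ∫⁻ x in Rot i0 i1 a b ⁻¹' s,
          ENNReal.ofReal (∏ i, gpdf (Rot i0 i1 a b x i)) ∂volume := by
        apply setLIntegral_congr_fun (hs.preimage hR)
        exact fun x _ => (hFR x).symm
    _ = ∫⁻ y in s, ENNReal.ofReal (∏ i, gpdf (y i)) ∂((volume : Measure (Fin D → ℝ)).map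
          (Rot i0 i1 a b)) :=
        (setLIntegral_map hs measurable_gprod.ennreal_ofReal hR).symm
    _ = ∫⁻ y in s, ENNReal.ofReal (∏ i, gpdf (y i)) ∂volume := by
        rw [volume_map_Rot h01 hab]

end GaussRot

section RotMDev

variable {D : ℕ}

/-- The matrix of `Rot`. -/
def RotM (i0 i1 : Fin D) (a b : ℝ) : Matrix (Fin D) (Fin D) ℝ :=
  Matrix.of fun i j =>
    if i = i0 then (if j = i0 then a else if j = i1 then -b else 0)
    else if i = i1 then (if j = i0 then b else if j = i1 then a else 0)
    else (if j = i then 1 else 0)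

variable {i0 i1 : Fin D} (h01 : i0 ≠ i1)
include h01

lemma RotM_mulVec (a b : ℝ) (v : Fin D → ℝ) :
    (RotM i0 i1 a b).mulVec v = Rot i0 i1 a b v := by
  funext i
  show (RotM i0 i1 a b i) ⬝ᵥ v = Rot i0 i1 a b v i
  by_cases h0 : i = i0
  · have hrow : RotM i0 i1 a b i = Pi.single i0 a + Pi.single i1 (-b) := by
      funext j
      by_cases hj0 : j = i0
      · simp [RotM, h0, hj0, Pi.single_apply, h01.symm]
      by_cases hj1 : j = i1
      · simp [RotM, h0, hj0, hj1, Pi.single_apply, h01, h01.symm]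
      · simp [RotM, h0, hj0, hj1, Pi.single_apply, Ne.symm hj0, Ne.symm hj1]
    rw [hrow, add_dotProduct, single_dotProduct, single_dotProduct, h0]
    simp [Rot]
    ring
  by_cases h1 : i = i1
  · have hrow : RotM i0 i1 a b i = Pi.single i0 b + Pi.single i1 a := by
      funext j
      by_cases hj0 : j = i0
      · simp [RotM, h1, hj0, Pi.single_apply, h01.symm]
      by_cases hj1 : j = i1
      · simp [RotM, h1, hj0, hj1, Pi.single_apply, h01, h01.symm]
      · simp [RotM, h1, hj0, hj1, Pi.single_apply, Ne.symm hj0, Ne.symm hj1]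
    rw [hrow, add_dotProduct, single_dotProduct, single_dotProduct, h1]
    simp [Rot, h01.symm]
  · have hrow : RotM i0 i1 a b i = Pi.single i (1:ℝ) := by
      funext j
      by_cases hj : j = i
      · simp [RotM, h0, h1, hj, Pi.single_apply]
      · simp [RotM, h0, h1, hj, Pi.single_apply, Ne.symm hj]
    rw [hrow, single_dotProduct, one_mul]
    simp [Rot, h0, h1]

end RotMDev

section MainDev

variable {D : ℕ}

lemma cont_pair_cf (ξ₀ ξ₁ : Fin D → ℝ) :
    Continuous (fun p : (Fin D → ℝ) × (Fin D → ℝ) =>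
      Complex.exp (Complex.I * ((ξ₀ ⬝ᵥ p.1 + ξ₁ ⬝ᵥ p.2 : ℝ) : ℂ))) := by
  apply Complex.continuous_exp.comp
  apply Continuous.mul continuous_const
  apply Complex.continuous_ofReal.comp
  apply Continuous.add
  · exact continuous_finset_sum _ fun i _ =>
      continuous_const.mul ((continuous_apply i).comp continuous_fst)
  · exact continuous_finset_sum _ fun i _ =>
      continuous_const.mul ((continuous_apply i).comp continuous_snd)

lemma gmeas_isGaussian : IsGaussianWith (gmeas D) 0 1 := by
  intro ξ
  rw [gmeas_charFun]
  rw [dotProduct_zero, one_mulVec]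
  congr 1
  push_cast
  ring

variable {i0 i1 : Fin D} (h01 : i0 ≠ i1)
include h01

lemma jointCF_pair (ξ₀ ξ₁ : Fin D → ℝ) :
    ∫ p, Complex.exp (Complex.I * ((ξ₀ ⬝ᵥ p.1 + ξ₁ ⬝ᵥ p.2 : ℝ)))
        ∂((gmeas D).map (fun g => (g, Rot i0 i1 0 1 g))) =
      Complex.exp (-(((ξ₀ + Rot i0 i1 0 (-1) ξ₁) ⬝ᵥ (ξ₀ + Rot i0 i1 0 (-1) ξ₁) : ℝ) : ℂ) / 2) := by
  have hpair : Measurable (fun g : Fin D → ℝ => (g, Rot i0 i1 0 1 g)) :=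
    measurable_id.prodMk (measurable_Rot h01 0 1)
  rw [integral_map hpair.aemeasurable (cont_pair_cf ξ₀ ξ₁).aestronglyMeasurable]
  have key : ∀ g : Fin D → ℝ, ξ₀ ⬝ᵥ g + ξ₁ ⬝ᵥ Rot i0 i1 0 1 g =
      (ξ₀ + Rot i0 i1 0 (-1) ξ₁) ⬝ᵥ g := by
    intro g
    rw [dot_Rot' h01, ← add_dotProduct]
  simp_rw [key]
  exact gmeas_charFun _

lemma jointCF_pair' (ξ₀ ξ₁ : Fin D → ℝ) :
    ∫ p, Complex.exp (Complex.I * ((ξ₀ ⬝ᵥ p.1 + ξ₁ ⬝ᵥ p.2 : ℝ)))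
        ∂((gmeas D).map (fun g => (Rot i0 i1 0 1 g, g))) =
      Complex.exp (-(((Rot i0 i1 0 (-1) ξ₀ + ξ₁) ⬝ᵥ (Rot i0 i1 0 (-1) ξ₀ + ξ₁) : ℝ) : ℂ) / 2) := by
  have hpair : Measurable (fun g : Fin D → ℝ => (Rot i0 i1 0 1 g, g)) :=
    (measurable_Rot h01 0 1).prodMk measurable_id
  rw [integral_map hpair.aemeasurable (cont_pair_cf ξ₀ ξ₁).aestronglyMeasurable]
  have key : ∀ g : Fin D → ℝ, ξ₀ ⬝ᵥ Rot i0 i1 0 1 g + ξ₁ ⬝ᵥ g =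
      (Rot i0 i1 0 (-1) ξ₀ + ξ₁) ⬝ᵥ g := by
    intro g
    rw [dot_Rot' h01, ← add_dotProduct]
  simp_rw [key]
  exact gmeas_charFun _

lemma isJoint_pair :
    IsJointGaussianWith ((gmeas D).map (fun g => (g, Rot i0 i1 0 1 g))) 0 0 1 1
      (RotM i0 i1 0 (-1)) := by
  intro ξ₀ ξ₁
  rw [jointCF_pair h01]
  have hq : ((ξ₀ + Rot i0 i1 0 (-1) ξ₁) ⬝ᵥ (ξ₀ + Rot i0 i1 0 (-1) ξ₁) : ℝ) =
      ξ₀ ⬝ᵥ (1 : Matrix (Fin D) (Fin D) ℝ).mulVec ξ₀ +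
        2 * (ξ₀ ⬝ᵥ (RotM i0 i1 0 (-1)).mulVec ξ₁) +
        ξ₁ ⬝ᵥ (1 : Matrix (Fin D) (Fin D) ℝ).mulVec ξ₁ := by
    rw [one_mulVec, one_mulVec, RotM_mulVec h01]
    rw [add_dotProduct, dotProduct_add, dotProduct_add]
    rw [dotProduct_comm (Rot i0 i1 0 (-1) ξ₁) ξ₀]
    rw [Rot_dot_self h01 (by norm_num) ξ₁]
    ring
  rw [← hq, dotProduct_zero, dotProduct_zero]
  congr 1
  push_cast
  ring

lemma isJoint_pair' :
    IsJointGaussianWith ((gmeas D).map (fun g => (Rot i0 i1 0 1 g, g))) 0 0 1 1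
      (RotM i0 i1 0 1) := by
  intro ξ₀ ξ₁
  rw [jointCF_pair' h01]
  have hq : ((Rot i0 i1 0 (-1) ξ₀ + ξ₁) ⬝ᵥ (Rot i0 i1 0 (-1) ξ₀ + ξ₁) : ℝ) =
      ξ₀ ⬝ᵥ (1 : Matrix (Fin D) (Fin D) ℝ).mulVec ξ₀ +
        2 * (ξ₀ ⬝ᵥ (RotM i0 i1 0 1).mulVec ξ₁) +
        ξ₁ ⬝ᵥ (1 : Matrix (Fin D) (Fin D) ℝ).mulVec ξ₁ := by
    rw [one_mulVec, one_mulVec, RotM_mulVec h01]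
    rw [dot_Rot' h01]
    rw [add_dotProduct, dotProduct_add, dotProduct_add]
    rw [dotProduct_comm ξ₁ (Rot i0 i1 0 (-1) ξ₀)]
    rw [Rot_dot_self h01 (by norm_num) ξ₀]
    ring
  rw [← hq, dotProduct_zero, dotProduct_zero]
  congr 1
  push_cast
  ring

end MainDev

theorem exists_distinct_couplings_same_interpolants {D : ℕ} (hD : 2 ≤ D) :
    ∃ (μ₀ μ₁ : Fin D → ℝ) (Sig0 Sig1 S S' : Matrix (Fin D) (Fin D) ℝ)
      (π π' : Measure ((Fin D → ℝ) × (Fin D → ℝ))),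
      IsProbabilityMeasure π ∧ IsProbabilityMeasure π' ∧
      IsJointGaussianWith π μ₀ μ₁ Sig0 Sig1 S ∧
      IsJointGaussianWith π' μ₀ μ₁ Sig0 Sig1 S' ∧
      π ≠ π' ∧
      IsGaussianWith (π.map Prod.fst) μ₀ Sig0 ∧
      IsGaussianWith (π.map Prod.snd) μ₁ Sig1 ∧
      IsGaussianWith (π'.map Prod.fst) μ₀ Sig0 ∧
      IsGaussianWith (π'.map Prod.snd) μ₁ Sig1 ∧
      ∀ t ∈ Set.Icc (0:ℝ) 1,
        π.map (fun p => (1 - t) • p.1 + t • p.2) =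
        π'.map (fun p => (1 - t) • p.1 + t • p.2) := by
  have h2 : 0 < D := by omega
  set i0 : Fin D := ⟨0, by omega⟩ with hi0
  set i1 : Fin D := ⟨1, by omega⟩ with hi1
  have h01 : i0 ≠ i1 := by
    simp [hi0, hi1, Fin.ext_iff]
  have hR : Measurable (Rot i0 i1 0 1 : (Fin D → ℝ) → (Fin D → ℝ)) := measurable_Rot h01 0 1
  have hpair : Measurable (fun g : Fin D → ℝ => (g, Rot i0 i1 0 1 g)) :=
    measurable_id.prodMk hR
  have hpair' : Measurable (fun g : Fin D → ℝ => (Rot i0 i1 0 1 g, g)) :=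
    hR.prodMk measurable_id
  refine ⟨0, 0, 1, 1, RotM i0 i1 0 (-1), RotM i0 i1 0 1,
    (gmeas D).map (fun g => (g, Rot i0 i1 0 1 g)),
    (gmeas D).map (fun g => (Rot i0 i1 0 1 g, g)),
    Measure.isProbabilityMeasure_map hpair.aemeasurable,
    Measure.isProbabilityMeasure_map hpair'.aemeasurable,
    isJoint_pair h01, isJoint_pair' h01, ?_, ?_, ?_, ?_, ?_, ?_⟩
  · -- π ≠ π'
    intro heq
    have e1 := isJoint_pair h01 (D := D) (Pi.single i0 1) (Pi.single i1 1)
    have e2 := isJoint_pair' h01 (D := D) (Pi.single i0 1) (Pi.single i1 1)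
    rw [heq] at e1
    have e3 := e1.symm.trans e2
    have hS : (Pi.single i0 (1:ℝ)) ⬝ᵥ (RotM i0 i1 0 (-1)).mulVec (Pi.single i1 1) = 1 := by
      rw [RotM_mulVec h01, single_dotProduct, one_mul, Rot_apply_i0]
      simp [Pi.single_apply, h01, h01.symm]
    have hS' : (Pi.single i0 (1:ℝ)) ⬝ᵥ (RotM i0 i1 0 1).mulVec (Pi.single i1 1) = -1 := by
      rw [RotM_mulVec h01, single_dotProduct, one_mul, Rot_apply_i0]
      simp [Pi.single_apply, h01, h01.symm]
    have hself0 : (Pi.single i0 (1:ℝ)) ⬝ᵥ (1 : Matrix (Fin D) (Fin D) ℝ).mulVec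
        (Pi.single i0 1) = 1 := by
      rw [one_mulVec, single_dotProduct, one_mul, Pi.single_eq_same]
    have hself1 : (Pi.single i1 (1:ℝ)) ⬝ᵥ (1 : Matrix (Fin D) (Fin D) ℝ).mulVec
        (Pi.single i1 1) = 1 := by
      rw [one_mulVec, single_dotProduct, one_mul, Pi.single_eq_same]
    rw [hS, hS', hself0, hself1, dotProduct_zero, dotProduct_zero] at e3
    norm_num at e3
    -- e3 : cexp (-2) = 1 (or similar); derive contradiction
    have h4 := congrArg norm e3
    rw [Complex.norm_exp, norm_one] at h4
    norm_num [Real.exp_eq_one_iff] at h4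
  · -- first marginal of π
    rw [Measure.map_map measurable_fst hpair]
    have : (Prod.fst ∘ fun g : Fin D → ℝ => (g, Rot i0 i1 0 1 g)) = id := rfl
    rw [this, Measure.map_id]
    exact gmeas_isGaussian
  · -- second marginal of π
    rw [Measure.map_map measurable_snd hpair]
    have : (Prod.snd ∘ fun g : Fin D → ℝ => (g, Rot i0 i1 0 1 g)) = Rot i0 i1 0 1 := rfl
    rw [this, gmeas_map_Rot h01 (by norm_num)]
    exact gmeas_isGaussian
  · -- first marginal of π'
    rw [Measure.map_map measurable_fst hpair']
    have : (Prod.fst ∘ fun g : Fin D → ℝ => (Rot i0 i1 0 1 g, g)) = Rot i0 i1 0 1 := rfl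
    rw [this, gmeas_map_Rot h01 (by norm_num)]
    exact gmeas_isGaussian
  · -- second marginal of π'
    rw [Measure.map_map measurable_snd hpair']
    have : (Prod.snd ∘ fun g : Fin D → ℝ => (Rot i0 i1 0 1 g, g)) = id := rfl
    rw [this, Measure.map_id]
    exact gmeas_isGaussian
  · -- interpolants agree
    intro t _
    have hft : Measurable (fun p : (Fin D → ℝ) × (Fin D → ℝ) => (1 - t) • p.1 + t • p.2) :=
      (measurable_fst.const_smul (1 - t)).add (measurable_snd.const_smul t)
    set c : ℝ := (1 - t)^2 + t^2 with hc
    have hcpos : 0 < c := by nlinarith [sq_nonneg (1 - 2*t)]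
    set a : ℝ := 2*t*(1-t)/c with ha
    set b : ℝ := (2*t-1)/c with hb
    have hab : a^2 + b^2 = 1 := by
      rw [ha, hb, div_pow, div_pow, ← add_div, div_eq_one_iff_eq (by positivity)]
      rw [hc]; ring
    have e1 : t * a - (1 - t) * b = 1 - t := by
      rw [ha, hb]
      field_simp
      ring
    have e2 : t * b + (1 - t) * a = t := by
      rw [ha, hb]
      field_simp
      ring
    rw [Measure.map_map hft hpair, Measure.map_map hft hpair']
    have hL : ((fun p : (Fin D → ℝ) × (Fin D → ℝ) => (1 - t) • p.1 + t • p.2) ∘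
        (fun g : Fin D → ℝ => (g, Rot i0 i1 0 1 g))) = Rot i0 i1 (1 - t) t := by
      funext g
      exact smul_add_smul_Rot h01 (by ring) g
    have hL' : ((fun p : (Fin D → ℝ) × (Fin D → ℝ) => (1 - t) • p.1 + t • p.2) ∘
        (fun g : Fin D → ℝ => (Rot i0 i1 0 1 g, g))) = Rot i0 i1 t (1 - t) := by
      funext g
      show (1 - t) • Rot i0 i1 0 1 g + t • g = Rot i0 i1 t (1 - t) g
      rw [add_comm]
      exact smul_add_smul_Rot h01 (by ring) g
    rw [hL, hL']
    have hcomp : (Rot i0 i1 (1 - t) t : (Fin D → ℝ) → (Fin D → ℝ)) =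
        (Rot i0 i1 t (1 - t)) ∘ (Rot i0 i1 a b) := by
      funext g
      show Rot i0 i1 (1 - t) t g = Rot i0 i1 t (1 - t) (Rot i0 i1 a b g)
      rw [Rot_comp h01, e1, e2]
    rw [hcomp, ← Measure.map_map (measurable_Rot h01 t (1 - t)) (measurable_Rot h01 a b),
      gmeas_map_Rot h01 hab]
end

section
/- Let p₀, p₁ be probability measures on ℝ with finite exponential moments, and let π, π' ∈ Π(p₀,p₁). Suppose the laws of (1−t)X₀ + tX₁ agree under π and π' for all t in a dense subset of [0,1]. Then they agree for all t ∈ [0,1], and hence π = π'. -/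
open MeasureTheory
open Set Filter


noncomputable def FMint (μ : Measure (ℝ × ℝ)) (z w : ℂ) : ℂ :=
  ∫ p : ℝ × ℝ, Complex.exp (z * p.1 + w * p.2) ∂μ

lemma norm_cexp_mix (z w : ℂ) (x y : ℝ) :
    ‖Complex.exp (z * x + w * y)‖ = Real.exp (z.re * x + w.re * y) := by
  rw [Complex.norm_exp]
  congr 1
  simp [Complex.add_re, Complex.mul_re]

lemma exp_mix_le {c : ℝ} {z w : ℂ} (hz : |z.re| ≤ c) (hw : |w.re| ≤ c) (x y : ℝ) :
    ‖Complex.exp (z * x + w * y)‖ ≤ Real.exp (c * |x|) * Real.exp (c * |y|) := by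
  rw [norm_cexp_mix, ← Real.exp_add]
  apply Real.exp_le_exp.2
  have h1 : z.re * x ≤ c * |x| := by
    calc z.re * x ≤ |z.re * x| := le_abs_self _
    _ = |z.re| * |x| := abs_mul _ _
    _ ≤ c * |x| := by apply mul_le_mul_of_nonneg_right hz (abs_nonneg _)
  have h2 : w.re * y ≤ c * |y| := by
    calc w.re * y ≤ |w.re * y| := le_abs_self _
    _ = |w.re| * |y| := abs_mul _ _
    _ ≤ c * |y| := by apply mul_le_mul_of_nonneg_right hw (abs_nonneg _)
  linarith

lemma convex_strip2 (a₁ b₁ a₂ b₂ : ℂ) (c : ℝ) :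
    Convex ℝ {z : ℂ | |(a₁ + b₁ * z).re| < c ∧ |(a₂ + b₂ * z).re| < c} := by
  have key : ∀ (a b : ℂ), Convex ℝ {z : ℂ | |(a + b * z).re| < c} := by
    intro a b x hx y hy s t hs ht hst
    simp only [mem_setOf_eq] at hx hy ⊢
    have hst' : (s : ℂ) + t = 1 := by exact_mod_cast congrArg (Complex.ofReal) hst
    have hrw : a + b * (s • x + t • y) = s • (a + b * x) + t • (a + b * y) := by
      simp only [Complex.real_smul]
      linear_combination (-a) * hst'
    rw [hrw]
    have hre : (s • (a + b * x) + t • (a + b * y)).re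
        = s * (a + b * x).re + t * (a + b * y).re := by
      simp only [Complex.real_smul, Complex.add_re, Complex.mul_re,
        Complex.ofReal_re, Complex.ofReal_im]
      ring
    rw [hre]
    have habs : |s * (a + b * x).re + t * (a + b * y).re|
        ≤ s * |(a + b * x).re| + t * |(a + b * y).re| := by
      refine (abs_add_le _ _).trans ?_
      rw [abs_mul, abs_mul, abs_of_nonneg hs, abs_of_nonneg ht]
    refine habs.trans_lt ?_
    rcases eq_or_lt_of_le hs with h | h
    · have ht1 : t = 1 := by linarith
      rw [← h, ht1]; simpa using hy
    · have hcc : s * c + t * c = c := by rw [← add_mul, hst, one_mul]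
      have h1 := mul_lt_mul_of_pos_left hx h
      have h2 := mul_le_mul_of_nonneg_left hy.le ht
      linarith
  exact (key a₁ b₁).inter (key a₂ b₂)

set_option maxHeartbeats 1000000 in
lemma analyticOnNhd_FM (μ : Measure (ℝ × ℝ)) [IsFiniteMeasure μ] {c : ℝ} (hc : 0 < c)
    (hd : Integrable (fun p : ℝ × ℝ => Real.exp (c * |p.1|) * Real.exp (c * |p.2|)) μ)
    (a₁ b₁ a₂ b₂ : ℂ) :
    AnalyticOnNhd ℂ (fun z => FMint μ (a₁ + b₁ * z) (a₂ + b₂ * z))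
      {z : ℂ | |(a₁ + b₁ * z).re| < c ∧ |(a₂ + b₂ * z).re| < c} := by
  set U : Set ℂ := {z : ℂ | |(a₁ + b₁ * z).re| < c ∧ |(a₂ + b₂ * z).re| < c} with hUdef
  have hcont1 : Continuous fun z : ℂ => (a₁ + b₁ * z).re :=
    Complex.continuous_re.comp (continuous_const.add (continuous_const.mul continuous_id))
  have hcont2 : Continuous fun z : ℂ => (a₂ + b₂ * z).re :=
    Complex.continuous_re.comp (continuous_const.add (continuous_const.mul continuous_id))
  have hUopen : IsOpen U :=
    (isOpen_lt (continuous_abs.comp hcont1) continuous_const).and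
      (isOpen_lt (continuous_abs.comp hcont2) continuous_const)
  refine DifferentiableOn.analyticOnNhd ?_ hUopen
  intro z₀ hz₀
  apply DifferentiableAt.differentiableWithinAt
  obtain ⟨hz₁, hz₂⟩ := hz₀
  set M : ℝ := max |(a₁ + b₁ * z₀).re| |(a₂ + b₂ * z₀).re| with hMdef
  have hM : M < c := max_lt hz₁ hz₂
  set δ : ℝ := (c - M) / 2 with hδdef
  have hδ : 0 < δ := by simp [hδdef]; linarith
  set K : ℝ := max ‖b₁‖ ‖b₂‖ with hKdef
  have hK : 0 ≤ K := le_max_of_le_left (norm_nonneg _)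
  set ε : ℝ := δ / (K + 1) with hεdef
  have hε : 0 < ε := div_pos hδ (by linarith)
  have hball : ∀ z ∈ Metric.ball z₀ ε,
      |(a₁ + b₁ * z).re| ≤ M + δ ∧ |(a₂ + b₂ * z).re| ≤ M + δ := by
    intro z hz
    rw [Metric.mem_ball] at hz
    constructor
    · have : (a₁ + b₁ * z).re = (a₁ + b₁ * z₀).re + (b₁ * (z - z₀)).re := by
        rw [← Complex.add_re]; ring_nf
      rw [this]
      refine (abs_add_le _ _).trans ?_
      have h1 : |(b₁ * (z - z₀)).re| ≤ ‖b₁‖ * ‖z - z₀‖ := by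
        refine (Complex.abs_re_le_norm _).trans ?_
        exact (norm_mul _ _).le
      have h2 : ‖b₁‖ * ‖z - z₀‖ ≤ K * ε := by
        apply mul_le_mul (le_max_left _ _) _ (norm_nonneg _) hK
        rw [← dist_eq_norm]; exact hz.le
      have h3 : K * ε ≤ δ := by
        rw [hεdef]
        calc K * (δ / (K + 1)) ≤ (K + 1) * (δ / (K + 1)) := by
              apply mul_le_mul_of_nonneg_right (by linarith) (by positivity)
        _ = δ := by field_simp
      have h4 : |(a₁ + b₁ * z₀).re| ≤ M := le_max_left _ _
      linarith
    · have : (a₂ + b₂ * z).re = (a₂ + b₂ * z₀).re + (b₂ * (z - z₀)).re := by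
        rw [← Complex.add_re]; ring_nf
      rw [this]
      refine (abs_add_le _ _).trans ?_
      have h1 : |(b₂ * (z - z₀)).re| ≤ ‖b₂‖ * ‖z - z₀‖ := by
        refine (Complex.abs_re_le_norm _).trans ?_
        exact (norm_mul _ _).le
      have h2 : ‖b₂‖ * ‖z - z₀‖ ≤ K * ε := by
        apply mul_le_mul (le_max_right _ _) _ (norm_nonneg _) hK
        rw [← dist_eq_norm]; exact hz.le
      have h3 : K * ε ≤ δ := by
        rw [hεdef]
        calc K * (δ / (K + 1)) ≤ (K + 1) * (δ / (K + 1)) := by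
              apply mul_le_mul_of_nonneg_right (by linarith) (by positivity)
        _ = δ := by field_simp
      have h4 : |(a₂ + b₂ * z₀).re| ≤ M := le_max_right _ _
      linarith
  set F : ℂ → ℝ × ℝ → ℂ :=
    fun z p => Complex.exp ((a₁ + b₁ * z) * p.1 + (a₂ + b₂ * z) * p.2) with hF
  set F' : ℂ → ℝ × ℝ → ℂ := fun z p => (b₁ * p.1 + b₂ * p.2) * F z p with hF'
  set bound : ℝ × ℝ → ℝ :=
    fun p => ((K + 1) / δ) * (Real.exp (c * |p.1|) * Real.exp (c * |p.2|)) with hbd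
  have hcontin : ∀ z : ℂ, Continuous fun p : ℝ × ℝ =>
      ((a₁ + b₁ * z) * p.1 + (a₂ + b₂ * z) * p.2 : ℂ) := fun z =>
    (continuous_const.mul (Complex.continuous_ofReal.comp continuous_fst)).add
      (continuous_const.mul (Complex.continuous_ofReal.comp continuous_snd))
  have hmeas : ∀ z : ℂ, AEStronglyMeasurable (F z) μ := fun z =>
    (Complex.continuous_exp.comp (hcontin z)).aestronglyMeasurable
  have hMδc : M + δ + δ = c := by rw [hδdef]; ring
  have key := hasDerivAt_integral_of_dominated_loc_of_deriv_le (μ := μ)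
    (F := F) (F' := F') (x₀ := z₀) (bound := bound) (Metric.ball_mem_nhds z₀ hε)
    (Eventually.of_forall hmeas)
    (by
      apply Integrable.mono' hd (hmeas z₀)
      refine Eventually.of_forall fun p => ?_
      exact exp_mix_le (le_trans (le_max_left _ _) hM.le)
        (le_trans (le_max_right _ _) hM.le) p.1 p.2)
    (by
      apply Continuous.aestronglyMeasurable
      exact Continuous.mul
        ((continuous_const.mul (Complex.continuous_ofReal.comp continuous_fst)).add
          (continuous_const.mul (Complex.continuous_ofReal.comp continuous_snd)))
        (Complex.continuous_exp.comp (hcontin z₀)))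
    (by
      refine Eventually.of_forall fun p => fun z hz => ?_
      obtain ⟨hb1, hb2⟩ := hball z hz
      have hnorm1 : ‖b₁ * (p.1:ℂ) + b₂ * (p.2:ℂ)‖ ≤ K * (|p.1| + |p.2|) := by
        refine (norm_add_le _ _).trans ?_
        rw [norm_mul, norm_mul, Complex.norm_real, Complex.norm_real,
          Real.norm_eq_abs, Real.norm_eq_abs, mul_add]
        gcongr
        exacts [le_max_left _ _, le_max_right _ _]
      have hnorm2 : ‖F z p‖ ≤ Real.exp ((M + δ) * (|p.1| + |p.2|)) := by
        have h5 := exp_mix_le (c := M + δ) hb1 hb2 p.1 p.2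
        rw [← Real.exp_add] at h5
        refine h5.trans (le_of_eq ?_)
        congr 1
        ring
      have hlin : (|p.1| + |p.2|) ≤ Real.exp (δ * (|p.1| + |p.2|)) / δ := by
        rw [le_div_iff₀ hδ]
        have h6 := Real.add_one_le_exp (δ * (|p.1| + |p.2|))
        nlinarith
      calc ‖F' z p‖ = ‖b₁ * (p.1:ℂ) + b₂ * (p.2:ℂ)‖ * ‖F z p‖ := norm_mul _ _
      _ ≤ (K * (|p.1| + |p.2|)) * Real.exp ((M + δ) * (|p.1| + |p.2|)) :=
          mul_le_mul hnorm1 hnorm2 (norm_nonneg _) (by positivity)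
      _ ≤ ((K + 1) * (Real.exp (δ * (|p.1| + |p.2|)) / δ)) *
            Real.exp ((M + δ) * (|p.1| + |p.2|)) := by
          apply mul_le_mul_of_nonneg_right _ (Real.exp_nonneg _)
          calc K * (|p.1| + |p.2|) ≤ (K + 1) * (|p.1| + |p.2|) := by nlinarith [abs_nonneg p.1, abs_nonneg p.2]
          _ ≤ (K + 1) * (Real.exp (δ * (|p.1| + |p.2|)) / δ) :=
              mul_le_mul_of_nonneg_left hlin (by linarith)
      _ = ((K + 1) / δ) * (Real.exp (δ * (|p.1| + |p.2|)) *
            Real.exp ((M + δ) * (|p.1| + |p.2|))) := by ring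
      _ = bound p := by
          simp only [hbd]
          rw [← Real.exp_add, ← Real.exp_add]
          congr 2
          linear_combination (|p.1| + |p.2|) * hMδc)
    (hd.const_mul _)
    (by
      refine Eventually.of_forall fun p => fun z hz => ?_
      have h1 : HasDerivAt (fun z : ℂ => (a₁ + b₁ * z) * (p.1:ℂ)) (b₁ * p.1) z := by
        simpa using (((hasDerivAt_id z).const_mul b₁).const_add a₁).mul_const (p.1:ℂ)
      have h2 : HasDerivAt (fun z : ℂ => (a₂ + b₂ * z) * (p.2:ℂ)) (b₂ * p.2) z := by
        simpa using (((hasDerivAt_id z).const_mul b₂).const_add a₂).mul_const (p.2:ℂ)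
      exact (h1.add h2).cexp.congr_deriv (mul_comm _ _))
  exact key.2.differentiableAt

lemma FM_eqOn (π π' : Measure (ℝ × ℝ)) [IsFiniteMeasure π] [IsFiniteMeasure π'] {c : ℝ}
    (hc : 0 < c)
    (hd : Integrable (fun p : ℝ × ℝ => Real.exp (c * |p.1|) * Real.exp (c * |p.2|)) π)
    (hd' : Integrable (fun p : ℝ × ℝ => Real.exp (c * |p.1|) * Real.exp (c * |p.2|)) π')
    (a₁ b₁ a₂ b₂ : ℂ) {z₀ : ℂ}
    (hz₀ : z₀ ∈ {z : ℂ | |(a₁ + b₁ * z).re| < c ∧ |(a₂ + b₂ * z).re| < c})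
    (hseed : z₀ ∈ closure ({z : ℂ | FMint π (a₁ + b₁ * z) (a₂ + b₂ * z)
      = FMint π' (a₁ + b₁ * z) (a₂ + b₂ * z)} \ {z₀})) :
    Set.EqOn (fun z => FMint π (a₁ + b₁ * z) (a₂ + b₂ * z))
      (fun z => FMint π' (a₁ + b₁ * z) (a₂ + b₂ * z))
      {z : ℂ | |(a₁ + b₁ * z).re| < c ∧ |(a₂ + b₂ * z).re| < c} :=
  (analyticOnNhd_FM π hc hd a₁ b₁ a₂ b₂).eqOn_of_preconnected_of_frequently_eq
    (analyticOnNhd_FM π' hc hd' a₁ b₁ a₂ b₂)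
    (convex_strip2 a₁ b₁ a₂ b₂ c).isPreconnected hz₀
    ((mem_closure_ne_iff_frequently_within.mp hseed).mono fun _ hz => hz)

lemma FMint_line (μ : Measure (ℝ × ℝ)) (t : ℝ) (ζ : ℂ) :
    FMint μ ((1 - t) * ζ) (t * ζ) =
      ∫ p : ℝ × ℝ, Complex.exp (ζ * (((1 - t) * p.1 + t * p.2 : ℝ) : ℂ)) ∂μ := by
  unfold FMint
  congr 1 with p
  congr 1
  push_cast
  ring

lemma map_eq_imp_FMint (π π' : Measure (ℝ × ℝ)) (t : ℝ)
    (h : π.map (fun p => (1 - t) * p.1 + t * p.2) =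
      π'.map (fun p => (1 - t) * p.1 + t * p.2)) (ζ : ℂ) :
    FMint π ((1 - t) * ζ) (t * ζ) = FMint π' ((1 - t) * ζ) (t * ζ) := by
  rw [FMint_line, FMint_line]
  have hf : Measurable fun p : ℝ × ℝ => (1 - t) * p.1 + t * p.2 :=
    (measurable_fst.const_mul (1 - t)).add (measurable_snd.const_mul t)
  have hg : ∀ ν : Measure ℝ, AEStronglyMeasurable (fun x : ℝ => Complex.exp (ζ * x)) ν :=
    fun ν => (Complex.continuous_exp.comp (by continuity)).aestronglyMeasurable
  rw [← integral_map hf.aemeasurable (hg _), ← integral_map hf.aemeasurable (hg _), h]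

set_option maxHeartbeats 1000000 in
lemma FM_all (π π' : Measure (ℝ × ℝ)) [IsProbabilityMeasure π] [IsProbabilityMeasure π'] {c : ℝ}
    (hc : 0 < c)
    (hd : Integrable (fun p : ℝ × ℝ => Real.exp (c * |p.1|) * Real.exp (c * |p.2|)) π)
    (hd' : Integrable (fun p : ℝ × ℝ => Real.exp (c * |p.1|) * Real.exp (c * |p.2|)) π')
    (T : Set ℝ) (hT : T ⊆ Icc 0 1) (hTd : Icc (0:ℝ) 1 ⊆ closure T)
    (h : ∀ t ∈ T, ∀ ζ : ℂ, FMint π ((1 - t) * ζ) (t * ζ) = FMint π' ((1 - t) * ζ) (t * ζ)) :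
    ∀ z w : ℂ, |z.re| < c → |w.re| < c → FMint π z w = FMint π' z w := by
  have hTpick : ∀ a b : ℝ, 0 ≤ a → b ≤ 1 → a < b → ∃ t ∈ T, a < t ∧ t < b := by
    intro a b ha hb hab
    have hy : (a + b) / 2 ∈ closure T := hTd ⟨by linarith, by linarith⟩
    obtain ⟨t, htIoo, htT⟩ := _root_.mem_closure_iff.1 hy (Ioo a b) isOpen_Ioo
      ⟨by linarith, by linarith⟩
    exact ⟨t, htT, htIoo.1, htIoo.2⟩
  have step1 : ∀ σ : ℝ, 0 < σ → σ < c → ∀ w : ℂ, |((σ:ℂ) - w).re| < c → |w.re| < c →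
      FMint π ((σ:ℂ) - w) w = FMint π' ((σ:ℂ) - w) w := by
    intro σ hσ0 hσc w hw1 hw2
    have heq := FM_eqOn π π' hc hd hd' (σ:ℂ) (-1) 0 1 (z₀ := ((σ/2 : ℝ) : ℂ))
      (by
        constructor
        · have e1 : ((σ:ℂ) + (-1) * ((σ/2 : ℝ):ℂ)) = ((σ/2 : ℝ) : ℂ) := by push_cast; ring
          rw [e1, Complex.ofReal_re]
          rw [abs_lt]; constructor <;> [linarith; linarith]
        · have e2 : ((0:ℂ) + 1 * ((σ/2 : ℝ):ℂ)) = ((σ/2 : ℝ) : ℂ) := by ring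
          rw [e2, Complex.ofReal_re, abs_lt]; constructor <;> [linarith; linarith])
      (by
        rw [Metric.mem_closure_iff]
        intro ε hε
        set δ : ℝ := min (ε / (2 * σ)) (1/2) with hδdef
        have hδ0 : 0 < δ := lt_min (by positivity) (by norm_num)
        have hδle : δ ≤ ε / (2 * σ) := min_le_left _ _
        have hδle2 : δ ≤ 1/2 := min_le_right _ _
        obtain ⟨t, htT, ht1, ht2⟩ := hTpick (1/2) (1/2 + δ) (by norm_num) (by linarith) (by linarith)
        refine ⟨((σ * t : ℝ) : ℂ), ⟨?_, ?_⟩, ?_⟩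
        · show FMint π _ _ = FMint π' _ _
          have e1 : ((σ:ℂ) + (-1) * ((σ * t : ℝ):ℂ)) = (1 - (t:ℂ)) * σ := by push_cast; ring
          have e2 : ((0:ℂ) + 1 * ((σ * t : ℝ):ℂ)) = (t:ℂ) * σ := by push_cast; ring
          rw [e1, e2]
          exact h t htT (σ:ℂ)
        · simp only [Set.mem_singleton_iff]
          intro hcon
          rw [Complex.ofReal_inj] at hcon
          nlinarith
        · rw [Complex.isometry_ofReal.dist_eq, Real.dist_eq]
          have : |σ/2 - σ*t| = σ*t - σ/2 := by rw [abs_of_nonpos (by nlinarith)]; ring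
          rw [this]
          have h1 : σ * t - σ/2 < σ * δ := by nlinarith
          have h2 : σ * δ ≤ σ * (ε / (2*σ)) := by nlinarith
          have h3 : σ * (ε / (2*σ)) = ε/2 := by field_simp
          linarith)
    have hmem : w ∈ {z : ℂ | |((σ:ℂ) + (-1) * z).re| < c ∧ |((0:ℂ) + 1 * z).re| < c} := by
      constructor
      · have e1 : ((σ:ℂ) + (-1) * w) = (σ:ℂ) - w := by ring
        rw [e1]; exact hw1
      · have e2 : ((0:ℂ) + 1 * w) = w := by ring
        rw [e2]; exact hw2
    have := heq hmem
    simp only at this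
    have e1 : ((σ:ℂ) + (-1) * w) = (σ:ℂ) - w := by ring
    have e2 : ((0:ℂ) + 1 * w) = w := by ring
    rwa [e1, e2] at this
  intro z w hz hw
  set b : ℝ := w.re with hbdef
  have hb := abs_lt.1 hw
  set m : ℝ := min c (b + c) with hmdef
  have hm0 : 0 < m := lt_min hc (by linarith)
  have hmc : m ≤ c := min_le_left _ _
  have hmbc : m ≤ b + c := min_le_right _ _
  have hgen : ∀ σ : ℝ, 0 < σ → σ < m → |((σ:ℂ) - w).re| < c := by
    intro σ h1 h2
    have e : ((σ:ℂ) - w).re = σ - b := by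
      simp [Complex.sub_re, Complex.ofReal_re, hbdef]
    rw [e, abs_lt]
    constructor
    · nlinarith
    · nlinarith
  have key2 : ∀ σ : ℝ, 0 < σ → σ < m → FMint π ((σ:ℂ) - w) w = FMint π' ((σ:ℂ) - w) w :=
    fun σ h1 h2 => step1 σ h1 (lt_of_lt_of_le h2 hmc) w (hgen σ h1 h2) hw
  have heq := FM_eqOn π π' hc hd hd' 0 1 w 0 (z₀ := ((m/2 : ℝ) : ℂ) - w)
    (by
      constructor
      · have e1 : ((0:ℂ) + 1 * (((m/2 : ℝ):ℂ) - w)) = ((m/2 : ℝ):ℂ) - w := by ring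
        rw [e1]
        exact hgen (m/2) (by linarith) (by linarith)
      · have e2 : (w + 0 * (((m/2 : ℝ):ℂ) - w)) = w := by ring
        rw [e2]; exact hw)
    (by
      rw [Metric.mem_closure_iff]
      intro ε hε
      set δ : ℝ := min (ε/2) (m/4) with hδdef
      have hδ0 : 0 < δ := lt_min (by positivity) (by linarith)
      have hδ1 : δ ≤ ε/2 := min_le_left _ _
      have hδ2 : δ ≤ m/4 := min_le_right _ _
      set σ : ℝ := m/2 + δ with hσdef
      refine ⟨((σ : ℝ) : ℂ) - w, ⟨?_, ?_⟩, ?_⟩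
      · show FMint π _ _ = FMint π' _ _
        have e1 : ((0:ℂ) + 1 * (((σ : ℝ):ℂ) - w)) = ((σ : ℝ):ℂ) - w := by ring
        have e2 : (w + 0 * (((σ : ℝ):ℂ) - w)) = w := by ring
        rw [e1, e2]
        exact key2 σ (by rw [hσdef]; linarith) (by rw [hσdef]; linarith)
      · simp only [Set.mem_singleton_iff]
        intro hcon
        have h9 : ((σ : ℝ) : ℂ) = ((m/2 : ℝ) : ℂ) := by
          have := congrArg (· + w) hcon
          simpa using this
        rw [Complex.ofReal_inj] at h9
        linarith
      · rw [dist_sub_right, Complex.isometry_ofReal.dist_eq, Real.dist_eq]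
        have : |m/2 - σ| = δ := by rw [hσdef]; rw [abs_of_nonpos (by linarith)]; ring
        rw [this]; linarith)
  have hmem : z ∈ {z' : ℂ | |((0:ℂ) + 1 * z').re| < c ∧ |(w + 0 * z').re| < c} := by
    constructor
    · have e1 : ((0:ℂ) + 1 * z) = z := by ring
      rw [e1]; exact hz
    · have e2 : (w + 0 * z) = w := by ring
      rw [e2]; exact hw
  have := heq hmem
  simp only at this
  have e1 : ((0:ℂ) + 1 * z) = z := by ring
  have e2 : (w + 0 * z) = w := by ring
  rwa [e1, e2] at this

open scoped FourierTransform

noncomputable def toSchwartz (f : ℝ → ℂ) (hf : ContDiff ℝ ((⊤ : ℕ∞) : WithTop ℕ∞) f) (hsupp : HasCompactSupport f) :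
    SchwartzMap ℝ ℂ where
  toFun := f
  smooth' := hf
  decay' := by
    intro k n
    have h1 : Continuous fun x : ℝ => ‖x‖ ^ k * ‖iteratedFDeriv ℝ n f x‖ :=
      ((continuous_norm.pow k)).mul (hf.continuous_iteratedFDeriv (mod_cast le_top)).norm
    have h2 : HasCompactSupport fun x : ℝ => ‖x‖ ^ k * ‖iteratedFDeriv ℝ n f x‖ := by
      have := (hsupp.iteratedFDeriv (𝕜 := ℝ) n).norm
      exact this.mul_left
    obtain ⟨C, hC⟩ := h1.bounded_above_of_compact_support h2
    exact ⟨C, fun x => by simpa using hC x⟩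

@[simp] lemma toSchwartz_apply (f : ℝ → ℂ) (hf : ContDiff ℝ ((⊤ : ℕ∞) : WithTop ℕ∞) f) (hsupp : HasCompactSupport f) (x : ℝ) :
    toSchwartz f hf hsupp x = f x := rfl

lemma schwartz_fourier_integrable (f : SchwartzMap ℝ ℂ) : Integrable (𝓕 ⇑f) volume :=
  (SchwartzMap.fourierTransformCLM ℂ f).integrable

lemma schwartz_fourier_continuous (f : SchwartzMap ℝ ℂ) : Continuous (𝓕 ⇑f) :=
  (SchwartzMap.fourierTransformCLM ℂ f).continuous

lemma schwartz_inv (f : SchwartzMap ℝ ℂ) (x : ℝ) :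
    f x = ∫ u : ℝ, Complex.exp (((2 * Real.pi * u * x : ℝ) : ℂ) * Complex.I) * (𝓕 ⇑f) u := by
  conv_lhs => rw [← Continuous.fourierInv_fourier_eq f.continuous f.integrable
    (schwartz_fourier_integrable f)]
  rw [Real.fourierInv_eq']
  congr 1 with u
  rw [smul_eq_mul]
  congr 2
  norm_num [show (inner ℝ u x : ℝ) = u * x by simp [mul_comm], mul_assoc]
  ring

set_option maxHeartbeats 1000000 in
lemma test_int_eq (μ : Measure (ℝ × ℝ)) [IsFiniteMeasure μ] (f g : SchwartzMap ℝ ℂ) :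
    ∫ p : ℝ × ℝ, f p.1 * g p.2 ∂μ
      = ∫ q : ℝ × ℝ, ((𝓕 ⇑f) q.1 * (𝓕 ⇑g) q.2) *
          FMint μ (((2 * Real.pi * q.1 : ℝ) : ℂ) * Complex.I)
            (((2 * Real.pi * q.2 : ℝ) : ℂ) * Complex.I) := by
  set H : (ℝ × ℝ) → (ℝ × ℝ) → ℂ := fun p q =>
    ((𝓕 ⇑f) q.1 * (𝓕 ⇑g) q.2) *
      Complex.exp ((((2 * Real.pi * q.1 : ℝ) : ℂ) * Complex.I) * p.1
        + (((2 * Real.pi * q.2 : ℝ) : ℂ) * Complex.I) * p.2) with hH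
  have hvol : (volume : Measure (ℝ × ℝ)) = (volume : Measure ℝ).prod volume := rfl
  have hpt : ∀ p : ℝ × ℝ, f p.1 * g p.2 = ∫ q : ℝ × ℝ, H p q := by
    intro p
    rw [schwartz_inv f p.1, schwartz_inv g p.2, hvol, ← integral_prod_mul]
    rw [← hvol]
    congr 1 with q
    simp only [hH]
    have key : ∀ r x : ℝ, (((r * x : ℝ)) : ℂ) * Complex.I = ((r : ℝ) : ℂ) * Complex.I * (x : ℂ) :=
      fun r x => by push_cast; ring
    rw [key (2 * Real.pi * q.1) p.1, key (2 * Real.pi * q.2) p.2, Complex.exp_add]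
    ring
  have hHcont : Continuous fun z : (ℝ × ℝ) × (ℝ × ℝ) => H z.1 z.2 := by
    apply Continuous.mul
    · exact ((schwartz_fourier_continuous f).comp (continuous_fst.comp continuous_snd)).mul
        ((schwartz_fourier_continuous g).comp (continuous_snd.comp continuous_snd))
    · apply Complex.continuous_exp.comp
      apply Continuous.add
      · exact ((Complex.continuous_ofReal.comp
          ((continuous_const.mul (continuous_fst.comp continuous_snd)))).mul
            continuous_const).mul (Complex.continuous_ofReal.comp (continuous_fst.comp continuous_fst))
      · exact ((Complex.continuous_ofReal.comp
          ((continuous_const.mul (continuous_snd.comp continuous_snd)))).mul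
            continuous_const).mul (Complex.continuous_ofReal.comp (continuous_snd.comp continuous_fst))
  have hbound : Integrable (fun q : ℝ × ℝ => ‖(𝓕 ⇑f) q.1‖ * ‖(𝓕 ⇑g) q.2‖)
      (volume : Measure (ℝ × ℝ)) := by
    rw [hvol]
    exact (schwartz_fourier_integrable f).norm.mul_prod (schwartz_fourier_integrable g).norm
  have hbig : Integrable (fun z : (ℝ × ℝ) × (ℝ × ℝ) => ‖(𝓕 ⇑f) z.2.1‖ * ‖(𝓕 ⇑g) z.2.2‖)
      (μ.prod (volume : Measure (ℝ × ℝ))) := by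
    have h1 : Integrable (fun _ : ℝ × ℝ => (1:ℝ)) μ := integrable_const 1
    have := h1.mul_prod hbound
    simpa using this
  have hint : Integrable (Function.uncurry H) (μ.prod (volume : Measure (ℝ × ℝ))) := by
    apply Integrable.mono' hbig hHcont.aestronglyMeasurable
    refine Filter.Eventually.of_forall fun z => ?_
    show ‖H z.1 z.2‖ ≤ _
    simp only [hH]
    rw [norm_mul, norm_mul]
    have : ‖Complex.exp ((((2 * Real.pi * z.2.1 : ℝ) : ℂ) * Complex.I) * z.1.1
        + (((2 * Real.pi * z.2.2 : ℝ) : ℂ) * Complex.I) * z.1.2)‖ = 1 := by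
      rw [Complex.norm_exp]
      have : ((((2 * Real.pi * z.2.1 : ℝ) : ℂ) * Complex.I) * z.1.1
          + (((2 * Real.pi * z.2.2 : ℝ) : ℂ) * Complex.I) * z.1.2).re = 0 := by
        simp [Complex.add_re, Complex.mul_re, Complex.mul_im]
      rw [this, Real.exp_zero]
    rw [this, mul_one]
  exact calc ∫ p : ℝ × ℝ, f p.1 * g p.2 ∂μ = ∫ p : ℝ × ℝ, (∫ q : ℝ × ℝ, H p q) ∂μ := by
              congr 1 with p; exact hpt p
  _ = ∫ q : ℝ × ℝ, (∫ p : ℝ × ℝ, H p q ∂μ) := integral_integral_swap hint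
  _ = ∫ q : ℝ × ℝ, ((𝓕 ⇑f) q.1 * (𝓕 ⇑g) q.2) *
        FMint μ (((2 * Real.pi * q.1 : ℝ) : ℂ) * Complex.I)
          (((2 * Real.pi * q.2 : ℝ) : ℂ) * Complex.I) := by
      congr 1 with q
      simp only [hH]
      rw [MeasureTheory.integral_const_mul]
      rfl

noncomputable def sbump (a : ℝ) (n : ℕ) : ContDiffBump ((a - n)/2 : ℝ) where
  rIn := max 1 ((a + n)/2)
  rOut := max 1 ((a + n)/2) + 1/(n+1)
  rIn_pos := lt_of_lt_of_le one_pos (le_max_left _ _)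
  rIn_lt_rOut := lt_add_of_pos_right _ (by positivity)

lemma sbump_one {a x : ℝ} (hx : x ≤ a) {n : ℕ} (h1 : 2 - a ≤ (n:ℝ)) (h2 : -x ≤ (n:ℝ)) :
    sbump a n x = 1 := by
  apply ContDiffBump.one_of_mem_closedBall
  rw [Metric.mem_closedBall, Real.dist_eq]
  have hin : (sbump a n).rIn = (a + n)/2 := max_eq_right (by linarith)
  rw [hin, abs_le]
  constructor <;> [linarith; linarith]

lemma sbump_zero {a x : ℝ} (hx : a < x) {n : ℕ} (h1 : 2 - a ≤ (n:ℝ))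
    (h2 : 1/((n:ℝ)+1) < x - a) : sbump a n x = 0 := by
  apply Function.notMem_support.mp
  rw [ContDiffBump.support_eq, Metric.mem_ball, Real.dist_eq, not_lt]
  have hout : (sbump a n).rOut = (a + n)/2 + 1/(n+1) := by
    show max 1 ((a + n)/2) + 1/((n:ℝ)+1) = _
    rw [max_eq_right (by linarith)]
  rw [hout, abs_of_nonneg (by linarith)]
  linarith

noncomputable def sbumpS (a : ℝ) (n : ℕ) : SchwartzMap ℝ ℂ :=
  toSchwartz (fun x => ((sbump a n x : ℝ) : ℂ))
    (Complex.ofRealCLM.contDiff.comp (sbump a n).contDiff)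
    (((sbump a n).hasCompactSupport).comp_left (g := Complex.ofReal) Complex.ofReal_zero)

lemma sbumpS_apply (a : ℝ) (n : ℕ) (x : ℝ) : sbumpS a n x = ((sbump a n x : ℝ) : ℂ) := rfl

lemma sbump_tendsto (a x : ℝ) :
    Filter.Tendsto (fun n : ℕ => ((sbump a n x : ℝ) : ℂ)) Filter.atTop
      (nhds (Set.indicator (Iic a) (fun _ => (1:ℂ)) x)) := by
  rcases le_or_gt x a with hx | hx
  · rw [Set.indicator_of_mem (Set.mem_Iic.mpr hx)]
    refine Filter.Tendsto.congr' ?_ tendsto_const_nhds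
    filter_upwards [Filter.eventually_ge_atTop (⌈(2:ℝ) - a⌉₊ ⊔ ⌈-x⌉₊)] with n hn
    have hn1 : (⌈(2:ℝ) - a⌉₊ : ℝ) ≤ (n:ℝ) := by
      exact_mod_cast le_trans (le_max_left _ _) hn
    have hn2 : (⌈-x⌉₊ : ℝ) ≤ (n:ℝ) := by
      exact_mod_cast le_trans (le_max_right _ _) hn
    have h1 : 2 - a ≤ (n:ℝ) := le_trans (Nat.le_ceil _) hn1
    have h2 : -x ≤ (n:ℝ) := le_trans (Nat.le_ceil _) hn2
    rw [sbump_one hx h1 h2, Complex.ofReal_one]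
  · rw [Set.indicator_of_notMem (by simpa using hx.not_ge)]
    refine Filter.Tendsto.congr' ?_ tendsto_const_nhds
    filter_upwards [Filter.eventually_ge_atTop (⌈(2:ℝ) - a⌉₊ ⊔ ⌈1/(x - a)⌉₊)] with n hn
    have hn1 : (⌈(2:ℝ) - a⌉₊ : ℝ) ≤ (n:ℝ) := by
      exact_mod_cast le_trans (le_max_left _ _) hn
    have hn2 : (⌈1/(x - a)⌉₊ : ℝ) ≤ (n:ℝ) := by
      exact_mod_cast le_trans (le_max_right _ _) hn
    have h1 : 2 - a ≤ (n:ℝ) := le_trans (Nat.le_ceil _) hn1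
    have hxa : 0 < x - a := by linarith
    have h3 : 1/((n:ℝ)+1) < x - a := by
      have hge : 1/(x - a) ≤ (n:ℝ) := le_trans (Nat.le_ceil _) hn2
      rw [div_le_iff₀ hxa] at hge
      rw [div_lt_iff₀ (by positivity)]
      nlinarith
    rw [sbump_zero hx h1 h3, Complex.ofReal_zero]

set_option maxHeartbeats 1000000 in
lemma measure_eq_of_char (μ ν : Measure (ℝ × ℝ)) [IsProbabilityMeasure μ] [IsProbabilityMeasure ν]
    (h : ∀ u v : ℝ, FMint μ ((u:ℂ) * Complex.I) ((v:ℂ) * Complex.I)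
      = FMint ν ((u:ℂ) * Complex.I) ((v:ℂ) * Complex.I)) : μ = ν := by
  have htest : ∀ f g : SchwartzMap ℝ ℂ,
      ∫ p : ℝ × ℝ, f p.1 * g p.2 ∂μ = ∫ p : ℝ × ℝ, f p.1 * g p.2 ∂ν := by
    intro f g
    rw [test_int_eq, test_int_eq]
    congr 1 with q
    rw [h (2 * Real.pi * q.1) (2 * Real.pi * q.2)]
  have hrect : ∀ a b : ℝ, μ (Iic a ×ˢ Iic b) = ν (Iic a ×ˢ Iic b) := by
    intro a b
    have hSmeas : MeasurableSet (Iic a ×ˢ Iic b : Set (ℝ × ℝ)) :=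
      measurableSet_Iic.prod measurableSet_Iic
    have hb : ∀ (n : ℕ) (p : ℝ × ℝ), ‖(sbumpS a n) p.1 * (sbumpS b n) p.2‖ ≤ 1 := by
      intro n p
      rw [norm_mul]
      have hone : ∀ (c : ℝ) (y : ℝ), ‖(sbumpS c n) y‖ ≤ 1 := by
        intro c y
        rw [sbumpS_apply, Complex.norm_real, Real.norm_eq_abs,
          abs_of_nonneg (sbump c n).nonneg]
        exact (sbump c n).le_one
      exact mul_le_one₀ (hone a p.1) (norm_nonneg _) (hone b p.2)
    have hl : ∀ p : ℝ × ℝ,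
        Filter.Tendsto (fun n : ℕ => (sbumpS a n) p.1 * (sbumpS b n) p.2) Filter.atTop
          (nhds (Set.indicator (Iic a ×ˢ Iic b) (fun _ => (1:ℂ)) p)) := by
      intro p
      have hmul := (sbump_tendsto a p.1).mul (sbump_tendsto b p.2)
      have : Set.indicator (Iic a) (fun _ => (1:ℂ)) p.1 * Set.indicator (Iic b) (fun _ => (1:ℂ)) p.2
          = Set.indicator (Iic a ×ˢ Iic b) (fun _ => (1:ℂ)) p := by
        by_cases h1 : p.1 ≤ a <;> by_cases h2 : p.2 ≤ b <;>
          simp [Set.indicator, Set.mem_prod, Prod.le_def, h1, h2]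
      rw [← this]
      exact hmul
    have hlim : ∀ (ρ : Measure (ℝ × ℝ)) [IsProbabilityMeasure ρ],
        Filter.Tendsto (fun n : ℕ => ∫ p : ℝ × ℝ, (sbumpS a n) p.1 * (sbumpS b n) p.2 ∂ρ)
          Filter.atTop (nhds ((ρ (Iic a ×ˢ Iic b)).toReal • (1:ℂ))) := by
      intro ρ _
      have := tendsto_integral_of_dominated_convergence (μ := ρ)
        (F := fun n p => (sbumpS a n) p.1 * (sbumpS b n) p.2)
        (f := fun p => Set.indicator (Iic a ×ˢ Iic b) (fun _ => (1:ℂ)) p)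
        (bound := fun _ => (1:ℝ))
        (fun n => (((sbumpS a n).continuous.comp continuous_fst).mul
          ((sbumpS b n).continuous.comp continuous_snd)).aestronglyMeasurable)
        (integrable_const 1)
        (fun n => Filter.Eventually.of_forall (hb n))
        (Filter.Eventually.of_forall hl)
      rwa [integral_indicator_const _ hSmeas] at this
    have h1 := hlim μ
    have h2 := hlim ν
    have h12 := h1.congr fun n => htest (sbumpS a n) (sbumpS b n)
    have heq := tendsto_nhds_unique h12 h2
    have heq2 : ((μ (Iic a ×ˢ Iic b)).toReal : ℂ) = ((ν (Iic a ×ˢ Iic b)).toReal : ℂ) := by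
      simpa [Complex.real_smul] using heq
    have heq3 : (μ (Iic a ×ˢ Iic b)).toReal = (ν (Iic a ×ˢ Iic b)).toReal := by
      exact_mod_cast heq2
    exact (ENNReal.toReal_eq_toReal_iff' (measure_ne_top _ _) (measure_ne_top _ _)).mp heq3
  have hspan : IsCountablySpanning (Set.range (Iic : ℝ → Set ℝ)) :=
    ⟨fun n => Iic n, fun n => ⟨n, rfl⟩, by
      ext x
      simp only [Set.mem_iUnion, Set.mem_Iic, Set.mem_univ, iff_true]
      exact exists_nat_ge x⟩
  have h1 : (inferInstance : MeasurableSpace ℝ)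
      = MeasurableSpace.generateFrom (Set.range Iic) := by
    rw [BorelSpace.measurable_eq (α := ℝ), borel_eq_generateFrom_Iic ℝ]
  have hprod := generateFrom_prod_eq hspan hspan
  rw [← h1] at hprod
  refine ext_of_generate_finite _ hprod (isPiSystem_Iic.prod isPiSystem_Iic) ?_ ?_
  · rintro s ⟨S1, ⟨a, rfl⟩, S2, ⟨b, rfl⟩, rfl⟩
    exact hrect a b
  · simp [measure_univ]

lemma domin (π : Measure (ℝ × ℝ)) [IsProbabilityMeasure π] (p₀ p₁ : Measure ℝ) {l : ℝ}
    (hl : 0 < l)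
    (h₀ : Integrable (fun x => Real.exp (l * |x|)) p₀)
    (h₁ : Integrable (fun x => Real.exp (l * |x|)) p₁)
    (hπ0 : π.map Prod.fst = p₀) (hπ1 : π.map Prod.snd = p₁) :
    Integrable (fun p : ℝ × ℝ => Real.exp ((l/2) * |p.1|) * Real.exp ((l/2) * |p.2|)) π := by
  have hg : AEStronglyMeasurable (fun x : ℝ => Real.exp (l * |x|))
      (π.map (Prod.fst : ℝ × ℝ → ℝ)) :=
    (Real.continuous_exp.comp (continuous_const.mul continuous_abs)).aestronglyMeasurable
  have hg' : AEStronglyMeasurable (fun x : ℝ => Real.exp (l * |x|))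
      (π.map (Prod.snd : ℝ × ℝ → ℝ)) :=
    (Real.continuous_exp.comp (continuous_const.mul continuous_abs)).aestronglyMeasurable
  have hfst : Integrable (fun p : ℝ × ℝ => Real.exp (l * |p.1|)) π := by
    have h0 : Integrable (fun x => Real.exp (l * |x|)) (π.map Prod.fst) := by rw [hπ0]; exact h₀
    exact (integrable_map_measure hg measurable_fst.aemeasurable).mp h0
  have hsnd : Integrable (fun p : ℝ × ℝ => Real.exp (l * |p.2|)) π := by
    have h0 : Integrable (fun x => Real.exp (l * |x|)) (π.map Prod.snd) := by rw [hπ1]; exact h₁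
    exact (integrable_map_measure hg' measurable_snd.aemeasurable).mp h0
  apply Integrable.mono' ((hfst.add hsnd).div_const 2)
  · apply Continuous.aestronglyMeasurable
    exact ((Real.continuous_exp.comp (continuous_const.mul
      (continuous_abs.comp continuous_fst))).mul
      (Real.continuous_exp.comp (continuous_const.mul (continuous_abs.comp continuous_snd))))
  · refine Filter.Eventually.of_forall fun p => ?_
    have hsq1 : Real.exp ((l/2) * |p.1|) ^ 2 = Real.exp (l * |p.1|) := by
      rw [sq, ← Real.exp_add]
      congr 1
      ring
    have hsq2 : Real.exp ((l/2) * |p.2|) ^ 2 = Real.exp (l * |p.2|) := by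
      rw [sq, ← Real.exp_add]
      congr 1
      ring
    rw [Real.norm_eq_abs, abs_of_nonneg (by positivity)]
    simp only [Pi.add_apply]
    nlinarith [sq_nonneg (Real.exp ((l/2) * |p.1|) - Real.exp ((l/2) * |p.2|)),
      Real.exp_pos ((l/2) * |p.1|), Real.exp_pos ((l/2) * |p.2|)]

theorem inverse_FM_unique_of_dense_times
    (p₀ p₁ : Measure ℝ) [IsProbabilityMeasure p₀] [IsProbabilityMeasure p₁]
    (hexp : ∃ l : ℝ, 0 < l ∧ Integrable (fun x => Real.exp (l * |x|)) p₀ ∧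
      Integrable (fun x => Real.exp (l * |x|)) p₁)
    (π π' : Measure (ℝ × ℝ)) [IsProbabilityMeasure π] [IsProbabilityMeasure π']
    (hπ0 : π.map Prod.fst = p₀) (hπ1 : π.map Prod.snd = p₁)
    (hπ'0 : π'.map Prod.fst = p₀) (hπ'1 : π'.map Prod.snd = p₁)
    (T : Set ℝ) (hT : T ⊆ Set.Icc (0:ℝ) 1)
    (hTdense : Set.Icc (0:ℝ) 1 ⊆ closure T)
    (h : ∀ t ∈ T,
      π.map (fun p => (1 - t) * p.1 + t * p.2) =
      π'.map (fun p => (1 - t) * p.1 + t * p.2)) :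
    (∀ t ∈ Set.Icc (0:ℝ) 1,
      π.map (fun p => (1 - t) * p.1 + t * p.2) =
      π'.map (fun p => (1 - t) * p.1 + t * p.2)) ∧ π = π' := by
  obtain ⟨l, hl, h₀, h₁⟩ := hexp
  have hc : 0 < l/2 := by linarith
  have hd := domin π p₀ p₁ hl h₀ h₁ hπ0 hπ1
  have hd' := domin π' p₀ p₁ hl h₀ h₁ hπ'0 hπ'1
  have hFM : ∀ t ∈ T, ∀ ζ : ℂ,
      FMint π ((1 - t) * ζ) (t * ζ) = FMint π' ((1 - t) * ζ) (t * ζ) :=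
    fun t ht ζ => map_eq_imp_FMint π π' t (h t ht) ζ
  have hall := FM_all π π' hc hd hd' T hT hTdense hFM
  have hππ' : π = π' := by
    apply measure_eq_of_char
    intro u v
    exact hall _ _ (by simpa [Complex.mul_re] using hc) (by simpa [Complex.mul_re] using hc)
  exact ⟨fun t _ => by rw [hππ'], hππ'⟩
end
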